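/- arXiv:2206.11817 — 2 statements merged into one kernel-verified Lean document; each statement's English description precedes it below -/
import Mathlib

section
/- Let m ≥ 1 and 0 ≤ ℓ ≤ m − 1 be integers and let f : ℝ³ → ℝ be a Schwartz function. Then ‖D^ℓ f‖_{L^∞(ℝ³)} · ‖D^{m−ℓ} f‖_{L²(ℝ³)} ≤ C ‖f‖_{L²(ℝ³)}^{1/2} ‖D f‖_{L²(ℝ³)}^{1/2} ‖D^{m+1} f‖_{L²(ℝ³)} for an absolute constant C. -/
set_option maxHeartbeats 1000000

open MeasureTheory FourierTransform Real

local notation "V3" => EuclideanSpace ℝ (Fin 3)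


/-- Complexification of a real-valued Schwartz map. -/
noncomputable def sobolevComplexify {V : Type*} [NormedAddCommGroup V] [NormedSpace ℝ V]
    (f : SchwartzMap V ℝ) : SchwartzMap V ℂ where
  toFun x := (f x : ℂ)
  smooth' := Complex.ofRealCLM.contDiff.comp f.smooth'
  decay' := by
    intro k n
    obtain ⟨C, hC⟩ := f.decay' k n
    refine ⟨C, fun y => ?_⟩
    have h : (fun z : V => ((f z : ℝ) : ℂ)) = (RCLike.ofRealLI (K := ℂ)) ∘ f := rfl
    rw [h, (RCLike.ofRealLI (K := ℂ)).norm_iteratedFDeriv_comp_left ((f.smooth ⊤).contDiffAt (x := y)) (mod_cast le_top)]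
    exact hC y

/-- Cauchy–Schwarz for nonnegative functions. -/
lemma sobolev_cs {α : Type*} [MeasurableSpace α] (μ : Measure α) {u v : α → ℝ}
    (hu : AEStronglyMeasurable u μ) (hv : AEStronglyMeasurable v μ)
    (hu0 : ∀ x, 0 ≤ u x) (hv0 : ∀ x, 0 ≤ v x)
    (hu2 : Integrable (fun x => u x ^ 2) μ) (hv2 : Integrable (fun x => v x ^ 2) μ) :
    ∫ x, u x * v x ∂μ ≤ Real.sqrt (∫ x, u x ^ 2 ∂μ) * Real.sqrt (∫ x, v x ^ 2 ∂μ) := by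
  have hpq : (2 : ℝ).HolderConjugate 2 := Real.holderConjugate_iff.2 ⟨one_lt_two, by norm_num⟩
  have hmu : MemLp u (ENNReal.ofReal 2) μ := by
    rw [show ENNReal.ofReal 2 = 2 by norm_num]
    exact (memLp_two_iff_integrable_sq hu).2 hu2
  have hmv : MemLp v (ENNReal.ofReal 2) μ := by
    rw [show ENNReal.ofReal 2 = 2 by norm_num]
    exact (memLp_two_iff_integrable_sq hv).2 hv2
  have := integral_mul_le_Lp_mul_Lq_of_nonneg hpq
    (Filter.Eventually.of_forall hu0) (Filter.Eventually.of_forall hv0) hmu hmv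
  have e1 : ∫ x, u x ^ (2:ℝ) ∂μ = ∫ x, u x ^ 2 ∂μ := by
    congr 1; funext x; rw [show ((2:ℝ)) = ((2:ℕ):ℝ) by norm_num, Real.rpow_natCast]
  have e2 : ∫ x, v x ^ (2:ℝ) ∂μ = ∫ x, v x ^ 2 ∂μ := by
    congr 1; funext x; rw [show ((2:ℝ)) = ((2:ℕ):ℝ) by norm_num, Real.rpow_natCast]
  rw [e1, e2] at this
  calc ∫ x, u x * v x ∂μ ≤ (∫ x, u x ^ 2 ∂μ) ^ ((1:ℝ)/2) * (∫ x, v x ^ 2 ∂μ) ^ ((1:ℝ)/2) := this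
    _ = Real.sqrt (∫ x, u x ^ 2 ∂μ) * Real.sqrt (∫ x, v x ^ 2 ∂μ) := by
        rw [Real.sqrt_eq_rpow, Real.sqrt_eq_rpow]

/-- Discrete convexity. -/
lemma sobolev_discrete_convex (lam : ℕ → ℝ) (h : ∀ s, 2 * lam (s+1) ≤ lam s + lam (s+2)) :
    ∀ a s b : ℕ, a ≤ s → s ≤ b →
      ((b:ℝ) - a) * lam s ≤ ((b:ℝ) - s) * lam a + ((s:ℝ) - a) * lam b := by
  have dmono : Monotone (fun t => lam (t+1) - lam t) :=
    monotone_nat_of_le_succ (fun t => by have := h t; change lam (t+1) - lam t ≤ lam (t+1+1) - lam (t+1); linarith)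
  intro a s b has hsb
  set d : ℕ → ℝ := fun t => lam (t+1) - lam t with hd
  have tele : ∀ p q : ℕ, p ≤ q → ∑ t ∈ Finset.Ico p q, d t = lam q - lam p := by
    intro p q hpq
    rw [Finset.sum_Ico_eq_sub _ hpq, Finset.sum_range_sub (fun i => lam i),
      Finset.sum_range_sub (fun i => lam i)]
    ring
  have h1 : lam s - lam a ≤ ((s - a : ℕ) : ℝ) * d s := by
    have hb := Finset.sum_le_card_nsmul (Finset.Ico a s) d (d s)
      (fun t ht => dmono (le_of_lt (Finset.mem_Ico.1 ht).2))
    rw [tele a s has] at hb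
    simpa [Nat.card_Ico, nsmul_eq_mul] using hb
  have h2 : ((b - s : ℕ) : ℝ) * d s ≤ lam b - lam s := by
    have hb := Finset.card_nsmul_le_sum (Finset.Ico s b) d (d s)
      (fun t ht => dmono (Finset.mem_Ico.1 ht).1)
    rw [tele s b hsb] at hb
    simpa [Nat.card_Ico, nsmul_eq_mul] using hb
  have hA : (0:ℝ) ≤ ((s - a : ℕ) : ℝ) := Nat.cast_nonneg _
  have hB : (0:ℝ) ≤ ((b - s : ℕ) : ℝ) := Nat.cast_nonneg _
  have cA : ((s - a : ℕ) : ℝ) = (s:ℝ) - a := by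
    rw [Nat.cast_sub has]
  have cB : ((b - s : ℕ) : ℝ) = (b:ℝ) - s := by
    rw [Nat.cast_sub hsb]
  rw [cA] at h1 hA
  rw [cB] at h2 hB
  nlinarith [mul_le_mul_of_nonneg_left h1 hB, mul_le_mul_of_nonneg_left h2 hA]

lemma sobolev_interp (I : ℕ → ℝ) (hpos : ∀ s, 0 < I s)
    (hmid : ∀ s, I (s+1) ^ 2 ≤ I s * I (s+2)) (m l : ℕ) (hm : 1 ≤ m) (hl : l ≤ m - 1) :
    I l * I (l+2) ^ 3 * I (m-l) ^ 4 ≤ I 0 ^ 2 * I 1 ^ 2 * I (m+1) ^ 4 := by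
  set lam : ℕ → ℝ := fun s => Real.log (I s) with hlam
  have hmid' : ∀ s, 2 * lam (s+1) ≤ lam s + lam (s+2) := by
    intro s
    have h1 : Real.log (I (s+1) ^ 2) ≤ Real.log (I s * I (s+2)) :=
      (Real.log_le_log_iff (pow_pos (hpos (s+1)) 2) (mul_pos (hpos s) (hpos (s+2)))).2 (hmid s)
    rw [Real.log_pow, Real.log_mul (hpos s).ne' (hpos (s+2)).ne'] at h1
    simpa [hlam] using h1
  have hconv := sobolev_discrete_convex lam hmid'
  have hle : l + 1 ≤ m := by omega
  rw [← Real.log_le_log_iff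
      (mul_pos (mul_pos (hpos l) (pow_pos (hpos (l+2)) 3)) (pow_pos (hpos (m-l)) 4))
      (mul_pos (mul_pos (pow_pos (hpos 0) 2) (pow_pos (hpos 1) 2)) (pow_pos (hpos (m+1)) 4)),
    Real.log_mul (mul_pos (hpos l) (pow_pos (hpos (l+2)) 3)).ne' (pow_pos (hpos (m-l)) 4).ne',
    Real.log_mul (hpos l).ne' (pow_pos (hpos (l+2)) 3).ne',
    Real.log_mul (mul_pos (pow_pos (hpos 0) 2) (pow_pos (hpos 1) 2)).ne' (pow_pos (hpos (m+1)) 4).ne',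
    Real.log_mul (pow_pos (hpos 0) 2).ne' (pow_pos (hpos 1) 2).ne',
    Real.log_pow, Real.log_pow, Real.log_pow, Real.log_pow, Real.log_pow]
  push_cast
  have goal' : lam l + 3 * lam (l+2) + 4 * lam (m-l) ≤
      2 * lam 0 + 2 * lam 1 + 4 * lam (m+1) := by
    have hmpos : (0:ℝ) < (m:ℝ) := by exact_mod_cast hm
    have h4 := hconv 0 1 (m+1) (by omega) (by omega)
    push_cast at h4
    rcases Nat.eq_zero_or_pos l with hl0 | hl1
    · subst hl0
      have h2 := hconv 1 2 (m+1) (by omega) (by omega)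
      have h3 := hconv 1 m (m+1) hm (by omega)
      push_cast at h2 h3
      simp only [Nat.sub_zero]
      refine le_of_mul_le_mul_left ?_ hmpos
      nlinarith [h2, h3, h4]
    · have h1 := hconv 1 l (m+1) hl1 (by omega)
      have h2 := hconv 1 (l+2) (m+1) (by omega) (by omega)
      have h3 := hconv 1 (m-l) (m+1) (by omega) (by omega)
      have hcast : ((m - l : ℕ) : ℝ) = (m:ℝ) - (l:ℝ) := by
        rw [Nat.cast_sub (by omega)]
      rw [hcast] at h3
      push_cast at h1 h2 h3
      refine le_of_mul_le_mul_left ?_ hmpos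
      nlinarith [h1, h2, h3, h4]
  simpa [hlam] using goal'

lemma sobolev_int2 (G : SchwartzMap V3 ℂ) (k : ℕ) :
    Integrable (fun ξ : V3 => ‖ξ‖ ^ k * ‖G ξ‖ ^ 2) := by
  have hM : ∀ ξ : V3, ‖G ξ‖ ≤ (SchwartzMap.seminorm ℝ 0 0) G := fun ξ => G.norm_le_seminorm ℝ ξ
  have hM0 : 0 ≤ (SchwartzMap.seminorm ℝ 0 0) G := le_trans (norm_nonneg _) (hM 0)
  refine Integrable.mono
    ((G.integrable_pow_mul volume k).const_mul ((SchwartzMap.seminorm ℝ 0 0) G)) ?_ ?_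
  · exact ((continuous_norm.pow k).mul (G.continuous.norm.pow 2)).aestronglyMeasurable
  · refine Filter.Eventually.of_forall fun ξ => ?_
    rw [Real.norm_of_nonneg (by positivity),
      Real.norm_of_nonneg (mul_nonneg hM0 (by positivity))]
    nlinarith [mul_nonneg (mul_nonneg (pow_nonneg (norm_nonneg ξ) k) (norm_nonneg (G ξ)))
      (sub_nonneg.2 (hM ξ))]

lemma sobolev_agmon (G : SchwartzMap V3 ℂ) (l : ℕ) (x : V3)
    (hX : 0 < ∫ ξ : V3, ‖ξ‖ ^ (2*l) * ‖G ξ‖ ^ 2)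
    (hY : 0 < ∫ ξ : V3, ‖ξ‖ ^ (2*(l+2)) * ‖G ξ‖ ^ 2) :
    ‖𝓕⁻ (fun ξ : V3 => (‖ξ‖ : ℂ) ^ l * G ξ) x‖ ^ 8 ≤
      16 ^ 4 * (∫ η : V3, ((1 + ‖η‖) ^ 4)⁻¹) ^ 4 *
        ((∫ ξ : V3, ‖ξ‖ ^ (2*l) * ‖G ξ‖ ^ 2) *
          (∫ ξ : V3, ‖ξ‖ ^ (2*(l+2)) * ‖G ξ‖ ^ 2) ^ 3) := by
  have hfr : Module.finrank ℝ V3 = 3 := finrank_euclideanSpace_fin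
  set c1 : ℝ := ∫ η : V3, ((1 + ‖η‖) ^ 4)⁻¹ with hc1def
  have hc1int : Integrable (fun η : V3 => ((1 + ‖η‖) ^ 4)⁻¹) := by
    have h34 : (Module.finrank ℝ V3 : ℝ) < 4 := by rw [hfr]; norm_num
    refine (integrable_one_add_norm (μ := (volume : Measure V3)) h34).congr
      (Filter.Eventually.of_forall fun η => ?_)
    show ((1:ℝ) + ‖η‖) ^ (-(4:ℝ)) = ((1 + ‖η‖) ^ 4)⁻¹
    rw [Real.rpow_neg (by positivity), show ((4:ℝ)) = ((4:ℕ):ℝ) by norm_num,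
      Real.rpow_natCast]
  have hc1nn : 0 ≤ c1 := integral_nonneg fun η => by positivity
  set X : ℝ := Real.sqrt (∫ ξ : V3, ‖ξ‖ ^ (2*l) * ‖G ξ‖ ^ 2) with hXdef
  set Y : ℝ := Real.sqrt (∫ ξ : V3, ‖ξ‖ ^ (2*(l+2)) * ‖G ξ‖ ^ 2) with hYdef
  have hXp : 0 < X := Real.sqrt_pos.2 hX
  have hYp : 0 < Y := Real.sqrt_pos.2 hY
  have hX2 : X ^ 2 = ∫ ξ : V3, ‖ξ‖ ^ (2*l) * ‖G ξ‖ ^ 2 := Real.sq_sqrt hX.le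
  have hY2 : Y ^ 2 = ∫ ξ : V3, ‖ξ‖ ^ (2*(l+2)) * ‖G ξ‖ ^ 2 := Real.sq_sqrt hY.le
  set R : ℝ := Real.sqrt (Y / X) with hRdef
  have hRp : 0 < R := Real.sqrt_pos.2 (div_pos hYp hXp)
  have hR2 : R ^ 2 = Y / X := Real.sq_sqrt (div_pos hYp hXp).le
  have hR4 : R ^ 4 = Y ^ 2 / X ^ 2 := by
    rw [show R ^ 4 = (R ^ 2) ^ 2 by ring, hR2]; rw [div_pow]
  have hR4X : R ^ 4 * X ^ 2 = Y ^ 2 := by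
    rw [hR4]; field_simp
  clear_value c1 X Y R
  -- step 1 : the sup bound by the L¹ norm
  have step1 : ‖𝓕⁻ (fun ξ : V3 => (‖ξ‖ : ℂ) ^ l * G ξ) x‖ ≤
      ∫ ξ : V3, ‖ξ‖ ^ l * ‖G ξ‖ := by
    refine le_trans (VectorFourier.norm_fourierIntegral_le_integral_norm
      Real.fourierChar volume (-(innerₗ V3)) (fun ξ : V3 => (‖ξ‖ : ℂ) ^ l * G ξ) x)
      (le_of_eq ?_)
    simp only [norm_mul, norm_pow, Complex.norm_real, norm_norm]
  -- Cauchy-Schwarz with weight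
  set u : V3 → ℝ := fun ξ => ((R + ‖ξ‖) ^ 2)⁻¹ with hudef
  set v : V3 → ℝ := fun ξ => (R + ‖ξ‖) ^ 2 * (‖ξ‖ ^ l * ‖G ξ‖) with hvdef
  have hRξ : ∀ ξ : V3, 0 < R + ‖ξ‖ := fun ξ => add_pos_of_pos_of_nonneg hRp (norm_nonneg ξ)
  have huv : ∀ ξ, u ξ * v ξ = ‖ξ‖ ^ l * ‖G ξ‖ := by
    intro ξ
    rw [hudef, hvdef]
    simp only
    rw [← mul_assoc, inv_mul_cancel₀ (pow_pos (hRξ ξ) 2).ne', one_mul]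
  -- value of ∫ u²
  have hu2g : (fun ξ : V3 => u ξ ^ 2) =
      fun ξ : V3 => (fun η : V3 => ((R * (1 + ‖η‖)) ^ 4)⁻¹) (R⁻¹ • ξ) := by
    funext ξ
    simp only [hudef, norm_smul, norm_inv, Real.norm_of_nonneg hRp.le]
    have h : R * (1 + R⁻¹ * ‖ξ‖) = R + ‖ξ‖ := by field_simp
    rw [h]
    rw [inv_pow, ← pow_mul]
  have hgsplit : (fun η : V3 => ((R * (1 + ‖η‖)) ^ 4)⁻¹) =
      fun η : V3 => (R ^ 4)⁻¹ * ((1 + ‖η‖) ^ 4)⁻¹ := by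
    funext η; rw [mul_pow, mul_inv]
  have hgint : Integrable (fun η : V3 => ((R * (1 + ‖η‖)) ^ 4)⁻¹) := by
    rw [hgsplit]; exact hc1int.const_mul _
  have hu2int : Integrable (fun ξ : V3 => u ξ ^ 2) := by
    rw [hu2g]
    exact hgint.comp_smul (inv_ne_zero hRp.ne')
  have hu2val : (∫ ξ : V3, u ξ ^ 2) = c1 / R := by
    rw [hu2g]
    rw [MeasureTheory.Measure.integral_comp_inv_smul volume
      (fun η : V3 => ((R * (1 + ‖η‖)) ^ 4)⁻¹) R]
    rw [hgsplit, MeasureTheory.integral_const_mul, hfr,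
      abs_of_pos (pow_pos hRp 3), smul_eq_mul, ← hc1def]
    field_simp
  -- bound for ∫ v²
  have hbound : ∀ ξ : V3, v ξ ^ 2 ≤
      8*R^4*(‖ξ‖ ^ (2*l) * ‖G ξ‖ ^ 2) + 8*(‖ξ‖ ^ (2*l+4) * ‖G ξ‖ ^ 2) := by
    intro ξ
    have h1 : (0:ℝ) ≤ ‖ξ‖ := norm_nonneg ξ
    have key : ((R + ‖ξ‖) ^ 2) ^ 2 ≤ 8 * (R ^ 4 + ‖ξ‖ ^ 4) := by
      nlinarith [sq_nonneg (R - ‖ξ‖), sq_nonneg (R ^ 2 - ‖ξ‖ ^ 2), hRp.le]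
    have e : v ξ ^ 2 = ((R + ‖ξ‖) ^ 2) ^ 2 * (‖ξ‖ ^ l * ‖G ξ‖) ^ 2 := by
      rw [hvdef]; simp only; ring
    rw [e]
    calc ((R + ‖ξ‖) ^ 2) ^ 2 * (‖ξ‖ ^ l * ‖G ξ‖) ^ 2
        ≤ 8 * (R ^ 4 + ‖ξ‖ ^ 4) * (‖ξ‖ ^ l * ‖G ξ‖) ^ 2 :=
          mul_le_mul_of_nonneg_right key (by positivity)
      _ = 8*R^4*(‖ξ‖ ^ (2*l) * ‖G ξ‖ ^ 2) + 8*(‖ξ‖ ^ (2*l+4) * ‖G ξ‖ ^ 2) := by ring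
  have hgint2 : Integrable (fun ξ : V3 =>
      8*R^4*(‖ξ‖ ^ (2*l) * ‖G ξ‖ ^ 2) + 8*(‖ξ‖ ^ (2*l+4) * ‖G ξ‖ ^ 2)) :=
    ((sobolev_int2 G (2*l)).const_mul _).add ((sobolev_int2 G (2*l+4)).const_mul 8)
  have hv2int : Integrable (fun ξ : V3 => v ξ ^ 2) := by
    refine Integrable.mono hgint2 ?_ (Filter.Eventually.of_forall fun ξ => ?_)
    · refine Continuous.aestronglyMeasurable ?_
      rw [hvdef]
      exact (((continuous_const.add continuous_norm).pow 2).mul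
        ((continuous_norm.pow l).mul (G.continuous.norm))).pow 2
    · rw [Real.norm_of_nonneg (sq_nonneg _), Real.norm_of_nonneg (by positivity)]
      exact hbound ξ
  have hv2val : (∫ ξ : V3, v ξ ^ 2) ≤ 8*R^4*X^2 + 8*Y^2 := by
    have h2l4 : (2*(l+2)) = 2*l+4 := by ring
    calc (∫ ξ : V3, v ξ ^ 2) ≤ ∫ ξ : V3,
          (8*R^4*(‖ξ‖ ^ (2*l) * ‖G ξ‖ ^ 2) + 8*(‖ξ‖ ^ (2*l+4) * ‖G ξ‖ ^ 2)) :=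
        integral_mono hv2int hgint2 hbound
      _ = 8*R^4*(∫ ξ : V3, ‖ξ‖ ^ (2*l) * ‖G ξ‖ ^ 2)
          + 8*(∫ ξ : V3, ‖ξ‖ ^ (2*l+4) * ‖G ξ‖ ^ 2) := by
        rw [integral_add ((sobolev_int2 G (2*l)).const_mul _)
          ((sobolev_int2 G (2*l+4)).const_mul 8),
          MeasureTheory.integral_const_mul, MeasureTheory.integral_const_mul]
      _ = 8*R^4*X^2 + 8*Y^2 := by rw [hX2, hY2, h2l4]
  -- apply Cauchy-Schwarz
  have humeas : AEStronglyMeasurable u (volume : Measure V3) := by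
    refine Continuous.aestronglyMeasurable ?_
    rw [hudef]
    exact ((continuous_const.add continuous_norm).pow 2).inv₀ fun ξ => (pow_pos (hRξ ξ) 2).ne'
  have hvmeas : AEStronglyMeasurable v (volume : Measure V3) := by
    refine Continuous.aestronglyMeasurable ?_
    rw [hvdef]
    exact ((continuous_const.add continuous_norm).pow 2).mul
      ((continuous_norm.pow l).mul (G.continuous.norm))
  have hu0 : ∀ ξ, 0 ≤ u ξ := fun ξ => by rw [hudef]; positivity
  have hv0 : ∀ ξ, 0 ≤ v ξ := fun ξ => by rw [hvdef]; positivity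
  have cs := sobolev_cs volume humeas hvmeas hu0 hv0 hu2int hv2int
  have step2 : (∫ ξ : V3, ‖ξ‖ ^ l * ‖G ξ‖) ≤
      Real.sqrt (c1 / R) * Real.sqrt (16 * Y ^ 2) := by
    have e : (∫ ξ : V3, ‖ξ‖ ^ l * ‖G ξ‖) = ∫ ξ : V3, u ξ * v ξ := by
      congr 1; funext ξ; exact (huv ξ).symm
    rw [e]
    refine cs.trans ?_
    rw [hu2val]
    refine mul_le_mul_of_nonneg_left ?_ (Real.sqrt_nonneg _)
    refine Real.sqrt_le_sqrt (hv2val.trans (le_of_eq ?_))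
    linear_combination 8 * hR4X
  -- collect
  have hA0 : 0 ≤ ‖𝓕⁻ (fun ξ : V3 => (‖ξ‖ : ℂ) ^ l * G ξ) x‖ := norm_nonneg _
  have hA : ‖𝓕⁻ (fun ξ : V3 => (‖ξ‖ : ℂ) ^ l * G ξ) x‖ ≤
      Real.sqrt (c1 / R) * Real.sqrt (16 * Y ^ 2) := step1.trans step2
  have hsq8 : ∀ z : ℝ, 0 ≤ z → Real.sqrt z ^ 8 = z ^ 4 := by
    intro z hz
    rw [show (8:ℕ) = 2*4 from rfl, pow_mul, Real.sq_sqrt hz]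
  calc ‖𝓕⁻ (fun ξ : V3 => (‖ξ‖ : ℂ) ^ l * G ξ) x‖ ^ 8
      ≤ (Real.sqrt (c1 / R) * Real.sqrt (16 * Y ^ 2)) ^ 8 := pow_le_pow_left₀ hA0 hA 8
    _ = (c1 / R) ^ 4 * (16 * Y ^ 2) ^ 4 := by
        rw [mul_pow, hsq8 _ (by positivity), hsq8 _ (by positivity)]
    _ = 16 ^ 4 * c1 ^ 4 * (X ^ 2 * (Y ^ 2) ^ 3) := by
        rw [div_pow, hR4]
        field_simp
    _ = 16 ^ 4 * c1 ^ 4 * ((∫ ξ : V3, ‖ξ‖ ^ (2*l) * ‖G ξ‖ ^ 2) *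
          (∫ ξ : V3, ‖ξ‖ ^ (2*(l+2)) * ‖G ξ‖ ^ 2) ^ 3) := by rw [hX2, hY2]


/-- For integers `m ≥ 1`, `0 ≤ ℓ ≤ m - 1` and Schwartz `f : ℝ³ → ℝ`,
`‖D^ℓ f‖_{L^∞} ‖D^{m-ℓ} f‖_{L²} ≤ C ‖f‖_{L²}^{1/2} ‖Df‖_{L²}^{1/2} ‖D^{m+1} f‖_{L²}`,
where the homogeneous derivative norms are defined on the Fourier side:
`‖D^s f‖_{L²}² = ∫ |ξ|^{2s} |f̂ ξ|²` and `D^ℓ f` is the inverse Fourier transform of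
`ξ ↦ |ξ|^ℓ f̂ ξ`. -/
theorem sobolev_product_inequality :
    ∃ C : ℝ, 0 < C ∧ ∀ (m ℓ : ℕ), 1 ≤ m → ℓ ≤ m - 1 →
      ∀ (f : SchwartzMap (EuclideanSpace ℝ (Fin 3)) ℝ)
        (x : EuclideanSpace ℝ (Fin 3)),
      ‖𝓕⁻ (fun ξ => (‖ξ‖ : ℂ) ^ ℓ * 𝓕 (fun y => (f y : ℂ)) ξ) x‖ *
        Real.sqrt (∫ ξ : EuclideanSpace ℝ (Fin 3),
          ‖ξ‖ ^ (2 * (m - ℓ)) * ‖𝓕 (fun y => (f y : ℂ)) ξ‖ ^ 2) ≤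
      C * (Real.sqrt (∫ ξ : EuclideanSpace ℝ (Fin 3),
            ‖𝓕 (fun y => (f y : ℂ)) ξ‖ ^ 2)) ^ ((1 : ℝ) / 2) *
        (Real.sqrt (∫ ξ : EuclideanSpace ℝ (Fin 3),
            ‖ξ‖ ^ 2 * ‖𝓕 (fun y => (f y : ℂ)) ξ‖ ^ 2)) ^ ((1 : ℝ) / 2) *
        Real.sqrt (∫ ξ : EuclideanSpace ℝ (Fin 3),
          ‖ξ‖ ^ (2 * (m + 1)) * ‖𝓕 (fun y => (f y : ℂ)) ξ‖ ^ 2) := by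
  classical
  refine ⟨4 * Real.sqrt (∫ η : V3, ((1 + ‖η‖) ^ 4)⁻¹) + 1, by positivity, ?_⟩
  intro m l hm hl f x
  set c1 : ℝ := ∫ η : V3, ((1 + ‖η‖) ^ 4)⁻¹ with hc1def
  have hc1nn : 0 ≤ c1 := by
    rw [hc1def]; exact integral_nonneg fun η => by positivity
  set G : SchwartzMap V3 ℂ := SchwartzMap.fourierTransformCLM ℝ (sobolevComplexify f)
    with hGdef
  have hGfun : 𝓕 (fun y : V3 => ((f y : ℝ) : ℂ)) = ⇑G := by
    rw [hGdef, SchwartzMap.fourierTransformCLM_apply]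
    rfl
  simp only [hGfun]
  set I : ℕ → ℝ := fun s => ∫ ξ : V3, ‖ξ‖ ^ (2*s) * ‖G ξ‖ ^ 2 with hIdef
  have g1 : (∫ ξ : V3, ‖ξ‖ ^ (2*(m - l)) * ‖G ξ‖ ^ 2) = I (m - l) := by rw [hIdef]
  have g2 : (∫ ξ : V3, ‖G ξ‖ ^ 2) = I 0 := by rw [hIdef]; norm_num
  have g3 : (∫ ξ : V3, ‖ξ‖ ^ 2 * ‖G ξ‖ ^ 2) = I 1 := by rw [hIdef]
  have g4 : (∫ ξ : V3, ‖ξ‖ ^ (2*(m+1)) * ‖G ξ‖ ^ 2) = I (m+1) := by rw [hIdef]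
  rw [g1, g2, g3, g4]
  have hInn : ∀ s, 0 ≤ I s := by
    intro s; rw [hIdef]; exact integral_nonneg fun ξ => by positivity
  have hmid : ∀ s, I (s+1) ^ 2 ≤ I s * I (s+2) := by
    intro s
    have hu2 : Integrable (fun ξ : V3 => (‖ξ‖ ^ s * ‖G ξ‖) ^ 2) := by
      refine (sobolev_int2 G (2*s)).congr (Filter.Eventually.of_forall fun ξ => ?_)
      ring
    have hv2 : Integrable (fun ξ : V3 => (‖ξ‖ ^ (s+2) * ‖G ξ‖) ^ 2) := by
      refine (sobolev_int2 G (2*(s+2))).congr (Filter.Eventually.of_forall fun ξ => ?_)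
      ring
    have cs := sobolev_cs (volume : Measure V3) (u := fun ξ => ‖ξ‖ ^ s * ‖G ξ‖) (v := fun ξ => ‖ξ‖ ^ (s+2) * ‖G ξ‖)
      (((continuous_norm.pow s).mul G.continuous.norm).aestronglyMeasurable)
      (((continuous_norm.pow (s+2)).mul G.continuous.norm).aestronglyMeasurable)
      (fun ξ => by positivity) (fun ξ => by positivity) hu2 hv2
    have ea : I (s+1) = ∫ ξ : V3, ‖ξ‖ ^ (2*(s+1)) * ‖G ξ‖ ^ 2 := by rw [hIdef]
    have eb : (∫ ξ : V3, ‖ξ‖ ^ (2*(s+1)) * ‖G ξ‖ ^ 2)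
        = ∫ ξ : V3, (‖ξ‖ ^ s * ‖G ξ‖) * (‖ξ‖ ^ (s+2) * ‖G ξ‖) := by
      congr 1; funext ξ; ring
    have ea2 : I s = ∫ ξ : V3, ‖ξ‖ ^ (2*s) * ‖G ξ‖ ^ 2 := by rw [hIdef]
    have eb2 : (∫ ξ : V3, ‖ξ‖ ^ (2*s) * ‖G ξ‖ ^ 2)
        = ∫ ξ : V3, (‖ξ‖ ^ s * ‖G ξ‖) ^ 2 := by
      congr 1; funext ξ; ring
    have e2 : (∫ ξ : V3, (‖ξ‖ ^ s * ‖G ξ‖) ^ 2) = I s := (ea2.trans eb2).symm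
    have ea3 : I (s+2) = ∫ ξ : V3, ‖ξ‖ ^ (2*(s+2)) * ‖G ξ‖ ^ 2 := by rw [hIdef]
    have eb3 : (∫ ξ : V3, ‖ξ‖ ^ (2*(s+2)) * ‖G ξ‖ ^ 2)
        = ∫ ξ : V3, (‖ξ‖ ^ (s+2) * ‖G ξ‖) ^ 2 := by
      congr 1; funext ξ; ring
    have e3 : (∫ ξ : V3, (‖ξ‖ ^ (s+2) * ‖G ξ‖) ^ 2) = I (s+2) := (ea3.trans eb3).symm
    rw [ea, eb]
    calc (∫ ξ : V3, (‖ξ‖ ^ s * ‖G ξ‖) * (‖ξ‖ ^ (s+2) * ‖G ξ‖)) ^ 2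
        ≤ (Real.sqrt (∫ ξ : V3, (‖ξ‖ ^ s * ‖G ξ‖) ^ 2) *
            Real.sqrt (∫ ξ : V3, (‖ξ‖ ^ (s+2) * ‖G ξ‖) ^ 2)) ^ 2 := by
          refine pow_le_pow_left₀ (integral_nonneg fun ξ => by positivity) cs 2
      _ = (∫ ξ : V3, (‖ξ‖ ^ s * ‖G ξ‖) ^ 2) * (∫ ξ : V3, (‖ξ‖ ^ (s+2) * ‖G ξ‖) ^ 2) := by
          rw [mul_pow, Real.sq_sqrt (integral_nonneg fun ξ => by positivity),
            Real.sq_sqrt (integral_nonneg fun ξ => by positivity)]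
      _ = I s * I (s+2) := by rw [e2, e3]
  rcases eq_or_lt_of_le (hInn 0) with h0 | h0
  · -- degenerate case : I 0 = 0, hence G = 0 a.e. and the LHS vanishes
    have hz : (fun ξ : V3 => ‖ξ‖ ^ (2*0) * ‖G ξ‖ ^ 2) =ᵐ[(volume : Measure V3)] 0 := by
      rw [← integral_eq_zero_iff_of_nonneg (fun ξ => by positivity) (sobolev_int2 G (2*0))]
      have h00 : (∫ ξ : V3, ‖ξ‖ ^ (2*0) * ‖G ξ‖ ^ 2) = I 0 := by rw [hIdef]
      rw [h00]
      exact h0.symm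
    have hmz : I (m - l) = 0 := by
      rw [hIdef]
      refine integral_eq_zero_of_ae ?_
      filter_upwards [hz] with ξ hξ
      simp only [Nat.mul_zero, pow_zero, one_mul, Pi.zero_apply] at hξ
      have hG0 : G ξ = 0 := by simpa using hξ
      simp [hG0]
    rw [hmz, Real.sqrt_zero, mul_zero]
    positivity
  · -- main case
    have hGne : ∃ ξ0 : V3, G ξ0 ≠ 0 := by
      by_contra h
      push_neg at h
      have hI00 : I 0 = 0 := by
        rw [hIdef]; simp [h]
      rw [hI00] at h0
      exact lt_irrefl 0 h0
    obtain ⟨ξ0, hξ0⟩ := hGne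
    have hpos : ∀ s, 0 < I s := by
      intro s
      have hIs : I s = ∫ ξ : V3, ‖ξ‖ ^ (2*s) * ‖G ξ‖ ^ 2 := by rw [hIdef]
      rw [hIs, integral_pos_iff_support_of_nonneg (fun ξ => by positivity)
        (sobolev_int2 G (2*s))]
      have hop : IsOpen {ξ : V3 | G ξ ≠ 0} := by
        have he : {ξ : V3 | G ξ ≠ 0} = ⇑G ⁻¹' ({0}ᶜ) := rfl
        rw [he]
        exact isOpen_compl_singleton.preimage G.continuous
      have hsub : {ξ : V3 | G ξ ≠ 0} \ {0} ⊆
          Function.support fun ξ : V3 => ‖ξ‖ ^ (2*s) * ‖G ξ‖ ^ 2 := by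
        rintro ξ ⟨h1, h2⟩
        have hn0 : ξ ≠ 0 := h2
        have hx1 : 0 < ‖ξ‖ := norm_pos_iff.2 hn0
        have hx2 : 0 < ‖G ξ‖ := norm_pos_iff.2 h1
        exact (show (0:ℝ) < ‖ξ‖ ^ (2*s) * ‖G ξ‖ ^ 2 by positivity).ne'
      have h1 : 0 < (volume : Measure V3) ({ξ : V3 | G ξ ≠ 0} \ {0}) := by
        rw [measure_diff_null (measure_singleton 0)]
        exact hop.measure_pos volume ⟨ξ0, hξ0⟩
      exact h1.trans_le (measure_mono hsub)
    have hXp : 0 < ∫ ξ : V3, ‖ξ‖ ^ (2*l) * ‖G ξ‖ ^ 2 := by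
      have := hpos l; rw [hIdef] at this; exact this
    have hYp : 0 < ∫ ξ : V3, ‖ξ‖ ^ (2*(l+2)) * ‖G ξ‖ ^ 2 := by
      have := hpos (l+2); rw [hIdef] at this; exact this
    have eIl : I l = ∫ ξ : V3, ‖ξ‖ ^ (2*l) * ‖G ξ‖ ^ 2 := by rw [hIdef]
    have eIl2 : I (l+2) = ∫ ξ : V3, ‖ξ‖ ^ (2*(l+2)) * ‖G ξ‖ ^ 2 := by rw [hIdef]
    have hag : ‖𝓕⁻ (fun ξ : V3 => (‖ξ‖ : ℂ) ^ l * G ξ) x‖ ^ 8 ≤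
        16 ^ 4 * c1 ^ 4 * (I l * I (l+2) ^ 3) := by
      rw [eIl, eIl2, hc1def]
      exact sobolev_agmon G l x hXp hYp
    have hinterp := sobolev_interp I hpos hmid m l hm hl
    have hs8 : ∀ z : ℝ, 0 ≤ z → Real.sqrt z ^ (8:ℕ) = z ^ 4 := by
      intro z hz
      rw [show (8:ℕ) = 2*4 from rfl, pow_mul, Real.sq_sqrt hz]
    have hC8 : 16 ^ 4 * c1 ^ 4 ≤ (4 * Real.sqrt c1 + 1) ^ 8 := by
      have h1 : (4 * Real.sqrt c1) ^ 8 = 16 ^ 4 * c1 ^ 4 := by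
        rw [mul_pow, hs8 c1 hc1nn]
        norm_num
      calc 16 ^ 4 * c1 ^ 4 = (4 * Real.sqrt c1) ^ 8 := h1.symm
        _ ≤ (4 * Real.sqrt c1 + 1) ^ 8 :=
            pow_le_pow_left₀ (by positivity) (by linarith [Real.sqrt_nonneg c1]) 8
    have hq : ∀ z : ℝ, 0 ≤ z → (Real.sqrt z ^ ((1:ℝ)/2)) ^ (8:ℕ) = z ^ 2 := by
      intro z hz
      rw [← Real.rpow_natCast (Real.sqrt z ^ ((1:ℝ)/2)) 8,
        ← Real.rpow_mul (Real.sqrt_nonneg z),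
        show ((1:ℝ)/2) * ((8:ℕ):ℝ) = ((4:ℕ):ℝ) by norm_num,
        Real.rpow_natCast, show (4:ℕ) = 2*2 from rfl, pow_mul, Real.sq_sqrt hz]
    refine le_of_pow_le_pow_left₀ (n := 8) (by norm_num) ?_ ?_
    · refine mul_nonneg (mul_nonneg (mul_nonneg ?_ (Real.rpow_nonneg (Real.sqrt_nonneg _) _))
        (Real.rpow_nonneg (Real.sqrt_nonneg _) _)) (Real.sqrt_nonneg _)
      linarith [Real.sqrt_nonneg c1]
    calc (‖𝓕⁻ (fun ξ : V3 => (‖ξ‖ : ℂ) ^ l * G ξ) x‖ * Real.sqrt (I (m - l))) ^ 8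
        = ‖𝓕⁻ (fun ξ : V3 => (‖ξ‖ : ℂ) ^ l * G ξ) x‖ ^ 8 * I (m - l) ^ 4 := by
          rw [mul_pow, hs8 _ (hInn (m - l))]
      _ ≤ (16 ^ 4 * c1 ^ 4 * (I l * I (l+2) ^ 3)) * I (m - l) ^ 4 :=
          mul_le_mul_of_nonneg_right hag (pow_nonneg (hInn _) _)
      _ = 16 ^ 4 * c1 ^ 4 * (I l * I (l+2) ^ 3 * I (m - l) ^ 4) := by ring
      _ ≤ 16 ^ 4 * c1 ^ 4 * (I 0 ^ 2 * I 1 ^ 2 * I (m+1) ^ 4) := by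
          refine mul_le_mul_of_nonneg_left hinterp (mul_nonneg (by norm_num) (pow_nonneg hc1nn 4))
      _ ≤ (4 * Real.sqrt c1 + 1) ^ 8 * (I 0 ^ 2 * I 1 ^ 2 * I (m+1) ^ 4) :=
          mul_le_mul_of_nonneg_right hC8
            (mul_nonneg (mul_nonneg (pow_nonneg (hInn 0) 2) (pow_nonneg (hInn 1) 2)) (pow_nonneg (hInn (m+1)) 4))
      _ = ((4 * Real.sqrt c1 + 1) * Real.sqrt (I 0) ^ ((1:ℝ)/2) *
            Real.sqrt (I 1) ^ ((1:ℝ)/2) * Real.sqrt (I (m+1))) ^ 8 := by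
          rw [mul_pow, mul_pow, mul_pow, hq _ (hInn 0), hq _ (hInn 1),
            hs8 _ (hInn (m+1))]
          ring
end

section
/- Let μ, γ, κ, χ > 0 satisfy 32 χ (μ + χ + γ) > 1. For ξ ∈ ℝ³ consider the 6×6 Hermitian-part bound for the block matrix M(ξ) = [[−(μ+χ)|ξ|² Id₃, iχ R₃(ξ)], [iχ R₃(ξ), −(γ|ξ|² + 2χ) Id₃ − κ ξξ^T]]. Then there exists a constant c > 0, depending only on μ, χ, γ, such that Re⟨z, M(ξ) z⟩ ≤ −c |ξ|² |z|² for all z ∈ ℂ⁶ and all ξ ∈ ℝ³. -/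
set_option maxHeartbeats 1000000

lemma cs6 (a1 a2 a3 a4 a5 a6 b1 b2 b3 b4 b5 b6 : ℝ) :
    (a1*b1+a2*b2+a3*b3+a4*b4+a5*b5+a6*b6)^2
      ≤ (a1^2+a2^2+a3^2+a4^2+a5^2+a6^2)*(b1^2+b2^2+b3^2+b4^2+b5^2+b6^2) := by
  have h := Finset.sum_mul_sq_le_sq_mul_sq Finset.univ
    (![a1,a2,a3,a4,a5,a6]) (![b1,b2,b3,b4,b5,b6])
  simpa [Fin.sum_univ_six] using h

lemma lagrange3 (x y w s0 s1 s2 : ℝ) :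
    (w*s1 - y*s2)^2 + (-(w)*s0 + x*s2)^2 + (y*s0 - x*s1)^2
      ≤ (x^2+y^2+w^2)*(s0^2+s1^2+s2^2) := by
  nlinarith [sq_nonneg (x*s0+y*s1+w*s2)]

lemma keyCS (x y w p0 p1 p2 q0 q1 q2 r0 r1 r2 s0 s1 s2 : ℝ) :
    (p0*(w*s1 - y*s2) + p1*(-(w)*s0 + x*s2) + p2*(y*s0 - x*s1)
      - q0*(w*r1 - y*r2) - q1*(-(w)*r0 + x*r2) - q2*(y*r0 - x*r1))^2
    ≤ (x^2+y^2+w^2) * (p0^2+p1^2+p2^2+q0^2+q1^2+q2^2)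
        * (r0^2+r1^2+r2^2+s0^2+s1^2+s2^2) := by
  have h1 := cs6 p0 p1 p2 q0 q1 q2 (w*s1-y*s2) (-(w)*s0+x*s2) (y*s0-x*s1)
    (-(w*r1-y*r2)) (-(-(w)*r0+x*r2)) (-(y*r0-x*r1))
  have h2 := lagrange3 x y w s0 s1 s2
  have h3 := lagrange3 x y w r0 r1 r2
  have hP : (0:ℝ) ≤ p0^2+p1^2+p2^2+q0^2+q1^2+q2^2 := by positivity
  have h4 : (w*s1-y*s2)^2 + (-(w)*s0+x*s2)^2 + (y*s0-x*s1)^2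
      + (-(w*r1-y*r2))^2 + (-(-(w)*r0+x*r2))^2 + (-(y*r0-x*r1))^2
      ≤ (x^2+y^2+w^2)*(r0^2+r1^2+r2^2+s0^2+s1^2+s2^2) := by
    have e1 : (-(w*r1-y*r2))^2 = (w*r1-y*r2)^2 := by ring
    have e2 : (-(-(w)*r0+x*r2))^2 = (-(w)*r0+x*r2)^2 := by ring
    have e3 : (-(y*r0-x*r1))^2 = (y*r0-x*r1)^2 := by ring
    rw [e1, e2, e3]; linarith [h2, h3]
  calc (p0*(w*s1 - y*s2) + p1*(-(w)*s0 + x*s2) + p2*(y*s0 - x*s1)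
      - q0*(w*r1 - y*r2) - q1*(-(w)*r0 + x*r2) - q2*(y*r0 - x*r1))^2
      = (p0*(w*s1-y*s2) + p1*(-(w)*s0+x*s2) + p2*(y*s0-x*s1)
        + q0*(-(w*r1-y*r2)) + q1*(-(-(w)*r0+x*r2)) + q2*(-(y*r0-x*r1)))^2 := by ring
    _ ≤ (p0^2+p1^2+p2^2+q0^2+q1^2+q2^2) *
        ((w*s1-y*s2)^2 + (-(w)*s0+x*s2)^2 + (y*s0-x*s1)^2
          + (-(w*r1-y*r2))^2 + (-(-(w)*r0+x*r2))^2 + (-(y*r0-x*r1))^2) := h1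
    _ ≤ (p0^2+p1^2+p2^2+q0^2+q1^2+q2^2) *
        ((x^2+y^2+w^2)*(r0^2+r1^2+r2^2+s0^2+s1^2+s2^2)) :=
          mul_le_mul_of_nonneg_left h4 hP
    _ = (x^2+y^2+w^2) * (p0^2+p1^2+p2^2+q0^2+q1^2+q2^2)
        * (r0^2+r1^2+r2^2+s0^2+s1^2+s2^2) := by ring

lemma coupBound (χ Q A B T : ℝ) (hχ : 0 < χ) (hQA : 0 ≤ Q*A) (hB : 0 ≤ B)
    (hT2 : T^2 ≤ Q*A*B) : -(2*χ*T) ≤ χ/2*(Q*A) + 2*χ*B := by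
  have h : 0 ≤ Q*A/4 + B + T := by
    nlinarith [hT2, sq_nonneg (Q*A/4 - B), sq_nonneg (Q*A/4 + B + T)]
  nlinarith [mul_le_mul_of_nonneg_left h hχ.le]

lemma final_ineq (μ γ χ κ c Q A B T S : ℝ) (hχ : 0 < χ) (hκ : 0 < κ)
    (hQ : 0 ≤ Q) (hA : 0 ≤ A) (hB : 0 ≤ B) (hS : 0 ≤ S)
    (hcoup : -(2*χ*T) ≤ χ/2*(Q*A) + 2*χ*B)
    (hc1 : c ≤ μ) (hc2 : c ≤ γ) :
    -((μ + χ) * Q) * A - (γ * Q + 2 * χ) * B - κ * S - 2 * χ * T ≤ -c * Q * (A + B) := by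
  nlinarith [hcoup, mul_nonneg hκ.le hS,
    mul_nonneg (mul_nonneg (sub_nonneg.2 hc1) hQ) hA,
    mul_nonneg (mul_nonneg (sub_nonneg.2 hc2) hQ) hB,
    mul_nonneg (mul_nonneg hχ.le hQ) hA, mul_nonneg hχ.le hB]

open Matrix

/-- Coercivity of the symbol of the linearized micropolar system:
if `32 χ (μ + χ + γ) > 1` then there is `c > 0` depending only on `μ, χ, γ` with
`Re ⟨z, M(ξ) z⟩ ≤ -c |ξ|² |z|²` for all `z ∈ ℂ⁶`, `ξ ∈ ℝ³`, where
`M(ξ) = [[-(μ+χ)|ξ|² Id₃, iχR₃(ξ)], [iχR₃(ξ), -(γ|ξ|²+2χ)Id₃ - κξξᵀ]]`. -/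
theorem micropolar_symbol_coercive (μ γ χ : ℝ) (hμ : 0 < μ) (hγ : 0 < γ) (hχ : 0 < χ)
    (hsmall : 32 * χ * (μ + χ + γ) > 1) :
    ∃ c : ℝ, 0 < c ∧ ∀ (κ : ℝ), 0 < κ → ∀ (ξ : Fin 3 → ℝ) (z : Fin 3 ⊕ Fin 3 → ℂ),
      (∑ i, (starRingEnd ℂ) (z i) *
        (Matrix.fromBlocks
          ((-(((μ + χ) * ∑ i, (ξ i) ^ 2 : ℝ) : ℂ)) • (1 : Matrix (Fin 3) (Fin 3) ℂ))
          (((χ : ℝ) : ℂ) • Complex.I •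
            ((Matrix.of ![![0, ξ 2, -ξ 1], ![-(ξ 2), 0, ξ 0],
              ![ξ 1, -(ξ 0), 0]]).map (fun a => (a : ℂ))))
          (((χ : ℝ) : ℂ) • Complex.I •
            ((Matrix.of ![![0, ξ 2, -ξ 1], ![-(ξ 2), 0, ξ 0],
              ![ξ 1, -(ξ 0), 0]]).map (fun a => (a : ℂ))))
          ((-((γ * (∑ i, (ξ i) ^ 2) + 2 * χ : ℝ) : ℂ)) • (1 : Matrix (Fin 3) (Fin 3) ℂ)
            - ((κ : ℝ) : ℂ) •
              ((Matrix.vecMulVec ξ ξ).map (fun a => (a : ℂ))))).mulVec z i).re ≤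
      -c * (∑ i, (ξ i) ^ 2) * ∑ i, ‖z i‖ ^ 2 := by
  refine ⟨min μ γ, lt_min hμ hγ, ?_⟩
  intro κ hκ ξ z
  have hE : (∑ i, (starRingEnd ℂ) (z i) *
        (Matrix.fromBlocks
          ((-(((μ + χ) * ∑ i, (ξ i) ^ 2 : ℝ) : ℂ)) • (1 : Matrix (Fin 3) (Fin 3) ℂ))
          (((χ : ℝ) : ℂ) • Complex.I •
            ((Matrix.of ![![0, ξ 2, -ξ 1], ![-(ξ 2), 0, ξ 0],
              ![ξ 1, -(ξ 0), 0]]).map (fun a => (a : ℂ))))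
          (((χ : ℝ) : ℂ) • Complex.I •
            ((Matrix.of ![![0, ξ 2, -ξ 1], ![-(ξ 2), 0, ξ 0],
              ![ξ 1, -(ξ 0), 0]]).map (fun a => (a : ℂ))))
          ((-((γ * (∑ i, (ξ i) ^ 2) + 2 * χ : ℝ) : ℂ)) • (1 : Matrix (Fin 3) (Fin 3) ℂ)
            - ((κ : ℝ) : ℂ) •
              ((Matrix.vecMulVec ξ ξ).map (fun a => (a : ℂ))))).mulVec z i).re
      = -((μ+χ) * (ξ 0^2 + ξ 1^2 + ξ 2^2)) * ((z (Sum.inl 0)).re^2+(z (Sum.inl 0)).im^2+(z (Sum.inl 1)).re^2+(z (Sum.inl 1)).im^2+(z (Sum.inl 2)).re^2+(z (Sum.inl 2)).im^2)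
        - (γ * (ξ 0^2 + ξ 1^2 + ξ 2^2) + 2*χ) * ((z (Sum.inr 0)).re^2+(z (Sum.inr 0)).im^2+(z (Sum.inr 1)).re^2+(z (Sum.inr 1)).im^2+(z (Sum.inr 2)).re^2+(z (Sum.inr 2)).im^2)
        - κ * ((ξ 0*(z (Sum.inr 0)).re + ξ 1*(z (Sum.inr 1)).re + ξ 2*(z (Sum.inr 2)).re)^2 + (ξ 0*(z (Sum.inr 0)).im + ξ 1*(z (Sum.inr 1)).im + ξ 2*(z (Sum.inr 2)).im)^2)
        - 2*χ * ((z (Sum.inl 0)).re*(ξ 2*(z (Sum.inr 1)).im - ξ 1*(z (Sum.inr 2)).im) + (z (Sum.inl 1)).re*(-(ξ 2)*(z (Sum.inr 0)).im + ξ 0*(z (Sum.inr 2)).im) + (z (Sum.inl 2)).re*(ξ 1*(z (Sum.inr 0)).im - ξ 0*(z (Sum.inr 1)).im)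
              - (z (Sum.inl 0)).im*(ξ 2*(z (Sum.inr 1)).re - ξ 1*(z (Sum.inr 2)).re) - (z (Sum.inl 1)).im*(-(ξ 2)*(z (Sum.inr 0)).re + ξ 0*(z (Sum.inr 2)).re) - (z (Sum.inl 2)).im*(ξ 1*(z (Sum.inr 0)).re - ξ 0*(z (Sum.inr 1)).re)) := by
    simp only [Matrix.mulVec, dotProduct, Fintype.sum_sum_type, Fin.sum_univ_three,
      Matrix.fromBlocks_apply₁₁, Matrix.fromBlocks_apply₁₂, Matrix.fromBlocks_apply₂₁,
      Matrix.fromBlocks_apply₂₂, Matrix.smul_apply, Matrix.one_apply, Matrix.sub_apply,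
      Matrix.map_apply, Matrix.vecMulVec_apply, Matrix.of_apply, Matrix.cons_val',
      Matrix.cons_val_zero, Matrix.cons_val_one, Matrix.head_cons, Matrix.head_fin_const,
      Matrix.cons_val_fin_one, Matrix.empty_val', Matrix.cons_val_two, Matrix.tail_cons,
      smul_eq_mul, Fin.reduceEq, reduceIte, if_true, if_false, one_mul, mul_one, mul_zero,
      zero_mul, add_zero, zero_add, Complex.ofReal_pow, Complex.ofReal_re, Complex.ofReal_im,
      Complex.add_re, Complex.add_im, Complex.mul_re, Complex.mul_im, Complex.sub_re,
      Complex.sub_im, Complex.neg_re, Complex.neg_im, Complex.I_re, Complex.I_im,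
      Complex.conj_re, Complex.conj_im, Complex.zero_re, Complex.zero_im, neg_zero, neg_neg]
    ring
  have hR : (∑ i, ‖z i‖ ^ 2 : ℝ)
      = ((z (Sum.inl 0)).re^2+(z (Sum.inl 0)).im^2+(z (Sum.inl 1)).re^2+(z (Sum.inl 1)).im^2+(z (Sum.inl 2)).re^2+(z (Sum.inl 2)).im^2) + ((z (Sum.inr 0)).re^2+(z (Sum.inr 0)).im^2+(z (Sum.inr 1)).re^2+(z (Sum.inr 1)).im^2+(z (Sum.inr 2)).re^2+(z (Sum.inr 2)).im^2) := by
    have hn : ∀ u : ℂ, ‖u‖^2 = u.re^2 + u.im^2 := by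
      intro u
      rw [Complex.sq_norm, Complex.normSq_apply]; ring
    simp only [Fintype.sum_sum_type, Fin.sum_univ_three, hn]
    ring
  have hQsum : (∑ i, (ξ i) ^ 2 : ℝ) = ξ 0^2 + ξ 1^2 + ξ 2^2 := by
    simp [Fin.sum_univ_three]
  rw [hE, hR, hQsum]
  set x := ξ 0 with hxd; set y := ξ 1 with hyd; set w := ξ 2 with hwd
  set p0 := (z (Sum.inl 0)).re; set q0 := (z (Sum.inl 0)).im
  set p1 := (z (Sum.inl 1)).re; set q1 := (z (Sum.inl 1)).im
  set p2 := (z (Sum.inl 2)).re; set q2 := (z (Sum.inl 2)).im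
  set r0 := (z (Sum.inr 0)).re; set s0 := (z (Sum.inr 0)).im
  set r1 := (z (Sum.inr 1)).re; set s1 := (z (Sum.inr 1)).im
  set r2 := (z (Sum.inr 2)).re; set s2 := (z (Sum.inr 2)).im
  set c := min μ γ with hc
  set Q := x^2 + y^2 + w^2 with hQdef
  set A := p0^2+q0^2+p1^2+q1^2+p2^2+q2^2 with hAdef
  set B := r0^2+s0^2+r1^2+s1^2+r2^2+s2^2 with hBdef
  set T := p0*(w*s1 - y*s2) + p1*(-(w)*s0 + x*s2) + p2*(y*s0 - x*s1)
      - q0*(w*r1 - y*r2) - q1*(-(w)*r0 + x*r2) - q2*(y*r0 - x*r1) with hTdef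
  have hQ : 0 ≤ Q := by rw [hQdef]; positivity
  have hA : 0 ≤ A := by rw [hAdef]; positivity
  have hB : 0 ≤ B := by rw [hBdef]; positivity
  have hS : 0 ≤ (x*r0 + y*r1 + w*r2)^2 + (x*s0 + y*s1 + w*s2)^2 := by positivity
  have hT2 : T^2 ≤ Q*A*B := by
    have h := keyCS x y w p0 p1 p2 q0 q1 q2 r0 r1 r2 s0 s1 s2
    calc T^2 = (p0*(w*s1 - y*s2) + p1*(-(w)*s0 + x*s2) + p2*(y*s0 - x*s1)
      - q0*(w*r1 - y*r2) - q1*(-(w)*r0 + x*r2) - q2*(y*r0 - x*r1))^2 := by rw [hTdef]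
      _ ≤ (x^2+y^2+w^2) * (p0^2+p1^2+p2^2+q0^2+q1^2+q2^2)
        * (r0^2+r1^2+r2^2+s0^2+s1^2+s2^2) := h
      _ = Q*A*B := by rw [hQdef, hAdef, hBdef]; ring
  have hcoup := coupBound χ Q A B T hχ (mul_nonneg hQ hA) hB hT2
  have hc1 : c ≤ μ := min_le_left _ _
  have hc2 : c ≤ γ := min_le_right _ _
  exact final_ineq μ γ χ κ c Q A B T _ hχ hκ hQ hA hB hS hcoup hc1 hc2
end
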